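/- (Key step of Theorem 5) Fix G > 0 and B_i, B_j > 0 with B_i + B_j ≤ G·e^{−1}. The coordinated total revenue function f(p) = B_i·p + B_j·(ln((G − B_i·e^{1+p})/B_j) − 1) is well defined and nondecreasing on the interval [0, ln(G/(B_i + B_j)) − 1], with derivative f'(p) = B_i·(1 − B_j·e^{1+p}/(G − B_i·e^{1+p})) ≥ 0 there; consequently f is maximized over this interval at p = ln(G/(B_i + B_j)) − 1, where both operators' prices coincide and the total revenue equals (B_i + B_j)·(ln(G/(B_i + B_j)) − 1). -/

import Mathlib

open Real

/-- Key step of Theorem 5 (coordinated pricing): with `Bi + Bj ≤ G·e^{−1}`, the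
coordinated total revenue `f(p) = Bi·p + Bj·(ln((G − Bi·e^{1+p})/Bj) − 1)` is well
defined and nondecreasing on `[0, ln(G/(Bi+Bj)) − 1]`, with nonnegative derivative
`Bi·(1 − Bj·e^{1+p}/(G − Bi·e^{1+p}))` there; it is maximized at the right endpoint
`p = ln(G/(Bi+Bj)) − 1`, where both operators' prices coincide and the total
revenue equals `(Bi+Bj)·(ln(G/(Bi+Bj)) − 1)`. -/
theorem stmt_15 (G Bi Bj : ℝ) (hG : 0 < G) (hBi : 0 < Bi) (hBj : 0 < Bj)
    (hsum : Bi + Bj ≤ G * exp (-1)) :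
    (∀ p ∈ Set.Icc (0 : ℝ) (log (G / (Bi + Bj)) - 1), 0 < G - Bi * exp (1 + p)) ∧
    MonotoneOn (fun p : ℝ => Bi * p + Bj * (log ((G - Bi * exp (1 + p)) / Bj) - 1))
      (Set.Icc (0 : ℝ) (log (G / (Bi + Bj)) - 1)) ∧
    (∀ p ∈ Set.Icc (0 : ℝ) (log (G / (Bi + Bj)) - 1),
      deriv (fun p : ℝ => Bi * p + Bj * (log ((G - Bi * exp (1 + p)) / Bj) - 1)) p
        = Bi * (1 - Bj * exp (1 + p) / (G - Bi * exp (1 + p))) ∧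
      0 ≤ Bi * (1 - Bj * exp (1 + p) / (G - Bi * exp (1 + p)))) ∧
    (∀ p ∈ Set.Icc (0 : ℝ) (log (G / (Bi + Bj)) - 1),
      Bi * p + Bj * (log ((G - Bi * exp (1 + p)) / Bj) - 1) ≤
        Bi * (log (G / (Bi + Bj)) - 1) +
          Bj * (log ((G - Bi * exp (1 + (log (G / (Bi + Bj)) - 1))) / Bj) - 1)) ∧
    log ((G - Bi * exp (1 + (log (G / (Bi + Bj)) - 1))) / Bj) - 1
      = log (G / (Bi + Bj)) - 1 ∧
    Bi * (log (G / (Bi + Bj)) - 1) +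
        Bj * (log ((G - Bi * exp (1 + (log (G / (Bi + Bj)) - 1))) / Bj) - 1)
      = (Bi + Bj) * (log (G / (Bi + Bj)) - 1) := by
  have hBsum : 0 < Bi + Bj := by positivity
  set M := log (G / (Bi + Bj)) - 1 with hM
  have hMe : exp (1 + M) = G / (Bi + Bj) := by
    have : 1 + M = log (G / (Bi + Bj)) := by rw [hM]; ring
    rw [this, exp_log (by positivity)]
  have h0M : 0 ≤ M := by
    have h1 : exp 1 ≤ G / (Bi + Bj) := by
      rw [le_div_iff₀ hBsum]
      have := mul_le_mul_of_nonneg_right hsum (le_of_lt (exp_pos 1))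
      calc exp 1 * (Bi + Bj) = (Bi + Bj) * exp 1 := by ring
        _ ≤ G * exp (-1) * exp 1 := this
        _ = G := by rw [mul_assoc, ← exp_add]; simp
    have := log_le_log (exp_pos 1) h1
    rw [log_exp] at this
    simp only [hM]; linarith
  -- key bound on Icc
  have hkey : ∀ p ∈ Set.Icc (0 : ℝ) M, Bj * exp (1 + p) ≤ G - Bi * exp (1 + p) := by
    intro p hp
    have he : exp (1 + p) ≤ G / (Bi + Bj) := by
      rw [← hMe]; exact exp_le_exp.mpr (by linarith [hp.2])
    have : (Bi + Bj) * exp (1 + p) ≤ (Bi + Bj) * (G / (Bi + Bj)) :=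
      mul_le_mul_of_nonneg_left he (le_of_lt hBsum)
    rw [mul_div_cancel₀ _ (ne_of_gt hBsum)] at this
    nlinarith
  have hpos : ∀ p ∈ Set.Icc (0 : ℝ) M, 0 < G - Bi * exp (1 + p) := by
    intro p hp
    have := hkey p hp
    have : 0 < Bj * exp (1 + p) := by positivity
    linarith [hkey p hp]
  -- derivative
  have hder : ∀ p ∈ Set.Icc (0 : ℝ) M,
      HasDerivAt (fun p : ℝ => Bi * p + Bj * (log ((G - Bi * exp (1 + p)) / Bj) - 1))
        (Bi * (1 - Bj * exp (1 + p) / (G - Bi * exp (1 + p)))) p := by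
    intro p hp
    have hgp : 0 < G - Bi * exp (1 + p) := hpos p hp
    have h1 : HasDerivAt (fun p : ℝ => (G - Bi * exp (1 + p)) / Bj)
        (-(Bi * exp (1 + p)) / Bj) p := by
      have he : HasDerivAt (fun p : ℝ => exp (1 + p)) (exp (1 + p)) p := by
        have : HasDerivAt (fun p : ℝ => (1 : ℝ) + p) 1 p :=
          (hasDerivAt_id p).const_add 1
        have h := (Real.hasDerivAt_exp (1 + p)).comp p this
        rw [mul_one] at h; exact h
      have := ((he.const_mul Bi).const_sub G).div_const Bj
      simpa using this
    have hlog : HasDerivAt (fun p : ℝ => log ((G - Bi * exp (1 + p)) / Bj))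
        ((-(Bi * exp (1 + p)) / Bj) / ((G - Bi * exp (1 + p)) / Bj)) p :=
      h1.log (by positivity)
    have := (hasDerivAt_id p).const_mul Bi |>.add (((hlog.sub_const 1).const_mul Bj))
    refine this.congr_deriv ?_
    field_simp
    ring
  refine ⟨hpos, ?_, ?_, ?_, ?_, ?_⟩
  · -- monotone
    apply monotoneOn_of_deriv_nonneg (convex_Icc _ _)
    · intro p hp
      exact (hder p hp).continuousAt.continuousWithinAt
    · intro p hp
      rw [interior_Icc] at hp
      exact (hder p (Set.mem_Icc_of_Ioo hp)).differentiableAt.differentiableWithinAt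
    · intro p hp
      rw [interior_Icc] at hp
      have hp' := Set.mem_Icc_of_Ioo hp
      rw [(hder p hp').deriv]
      have hgp := hpos p hp'
      have := hkey p hp'
      have h2 : Bj * exp (1 + p) / (G - Bi * exp (1 + p)) ≤ 1 :=
        (div_le_one hgp).mpr this
      nlinarith
  · intro p hp
    refine ⟨(hder p hp).deriv, ?_⟩
    have hgp := hpos p hp
    have := hkey p hp
    have h2 : Bj * exp (1 + p) / (G - Bi * exp (1 + p)) ≤ 1 :=
      (div_le_one hgp).mpr this
    nlinarith
  · intro p hp
    have hmono : MonotoneOn (fun p : ℝ => Bi * p + Bj * (log ((G - Bi * exp (1 + p)) / Bj) - 1))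
        (Set.Icc (0 : ℝ) M) := by
      apply monotoneOn_of_deriv_nonneg (convex_Icc _ _)
      · intro q hq
        exact (hder q hq).continuousAt.continuousWithinAt
      · intro q hq
        rw [interior_Icc] at hq
        exact (hder q (Set.mem_Icc_of_Ioo hq)).differentiableAt.differentiableWithinAt
      · intro q hq
        rw [interior_Icc] at hq
        have hq' := Set.mem_Icc_of_Ioo hq
        rw [(hder q hq').deriv]
        have hgq := hpos q hq'
        have := hkey q hq'
        have h2 : Bj * exp (1 + q) / (G - Bi * exp (1 + q)) ≤ 1 :=
          (div_le_one hgq).mpr this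
        nlinarith
    exact hmono hp (Set.right_mem_Icc.mpr h0M) hp.2
  · rw [hMe]
    have : G - Bi * (G / (Bi + Bj)) = Bj * (G / (Bi + Bj)) := by
      field_simp; ring
    rw [this, mul_div_cancel_left₀ _ (ne_of_gt hBj)]
  · rw [hMe]
    have : G - Bi * (G / (Bi + Bj)) = Bj * (G / (Bi + Bj)) := by
      field_simp; ring
    rw [this, mul_div_cancel_left₀ _ (ne_of_gt hBj)]
    ring
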